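/- If p ∈ (0,1) satisfies 2p⁴ - 4p³ + 5p² - 1 = 0, then the function g(p) = p(1-p²)/(1 + 2p²(1-p)) is stationary at p; moreover there exists p ∈ (0,1) with 2p⁴ - 4p³ + 5p² - 1 = 0 and g(p) > 0.3016. -/

import Mathlib

theorem stmt_13 :
    (∀ p ∈ Set.Ioo (0:ℝ) 1, 2 * p ^ 4 - 4 * p ^ 3 + 5 * p ^ 2 - 1 = 0 →
      deriv (fun x : ℝ => x * (1 - x ^ 2) / (1 + 2 * x ^ 2 * (1 - x))) p = 0) ∧
    (∃ p ∈ Set.Ioo (0:ℝ) 1, 2 * p ^ 4 - 4 * p ^ 3 + 5 * p ^ 2 - 1 = 0 ∧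
      p * (1 - p ^ 2) / (1 + 2 * p ^ 2 * (1 - p)) > 0.3016) := by
  constructor
  · rintro p ⟨hp0, hp1⟩ hroot
    have hDne : (1 + 2 * p ^ 2 * (1 - p)) ≠ 0 := by nlinarith
    have hN : HasDerivAt (fun x : ℝ => x * (1 - x ^ 2)) (1 - 3 * p ^ 2) p := by
      have := (hasDerivAt_id p).mul ((hasDerivAt_const p (1:ℝ)).sub (hasDerivAt_pow 2 p))
      refine this.congr_deriv ?_
      simp only [Pi.sub_apply, id_eq]; norm_num; ring
    have hD : HasDerivAt (fun x : ℝ => 1 + 2 * x ^ 2 * (1 - x))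
        (4 * p - 6 * p ^ 2) p := by
      have := (hasDerivAt_const p (1:ℝ)).add
        (((hasDerivAt_pow 2 p).const_mul (2:ℝ)).mul
          ((hasDerivAt_const p (1:ℝ)).sub (hasDerivAt_id p)))
      refine this.congr_deriv ?_
      simp only [Pi.sub_apply, id_eq]; norm_num; ring
    rw [HasDerivAt.deriv (f := fun x : ℝ => x * (1 - x ^ 2) / (1 + 2 * x ^ 2 * (1 - x))) (hN.div hD hDne), div_eq_zero_iff]
    left
    linear_combination (-1 : ℝ) * hroot
  · have hcont : ContinuousOn (fun x : ℝ => 2 * x ^ 4 - 4 * x ^ 3 + 5 * x ^ 2 - 1)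
        (Set.Icc (0.5395 : ℝ) 0.542) := by fun_prop
    have hsub := intermediate_value_Ioo (by norm_num : (0.5395 : ℝ) ≤ 0.542) hcont
    have h0 : (0 : ℝ) ∈ Set.Ioo ((fun x : ℝ => 2 * x ^ 4 - 4 * x ^ 3 + 5 * x ^ 2 - 1) 0.5395)
        ((fun x : ℝ => 2 * x ^ 4 - 4 * x ^ 3 + 5 * x ^ 2 - 1) 0.542) := by
      constructor <;> norm_num
    obtain ⟨p, hp, hroot⟩ := hsub h0
    obtain ⟨hpa, hpb⟩ := hp
    refine ⟨p, ⟨by linarith, by linarith⟩, hroot, ?_⟩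
    have hD : (0:ℝ) < 1 + 2 * p ^ 2 * (1 - p) := by nlinarith
    rw [gt_iff_lt, lt_div_iff₀ hD]
    have h1 : (0:ℝ) < 0.542 - p := by linarith
    have h2 : (0:ℝ) < (p - 0.5395) * (0.542 - p) :=
      mul_pos (by linarith) (by linarith)
    have h3 : (0:ℝ) ≤ (p - 0.5395) ^ 2 * (0.542 - p) :=
      mul_nonneg (sq_nonneg _) (by linarith)
    nlinarith [h1, h2, h3]
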